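/- Let μ > 0, K ≥ 2, R ≥ 1 be given with K, R positive integers, and let η satisfy 0 ≤ η ≤ 1/(μKR). Then (1 − ημ)^{2KR} ≥ 1/16, and consequently for F(x) = (μ/2)x² and gradient descent iterates x_{t+1} = x_t − ηF'(x_t) = (1 − ημ)x_t starting from x₀, the final iterate after KR steps satisfies F(x_{KR}) ≥ (1/32)·μ·x₀². -/

import Mathlib

private lemma exp_four_le : Real.exp 4 ≤ 64 := by
  have h := Real.exp_one_lt_d9
  calc Real.exp 4 = (Real.exp 1) ^ (4:ℕ) := by
        rw [← Real.exp_nat_mul]; norm_num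
    _ ≤ (2.7182818286) ^ (4:ℕ) := pow_le_pow_left₀ (Real.exp_pos 1).le h.le 4
    _ ≤ 64 := by norm_num

private lemma exp_43_le : Real.exp (4/3) ≤ 4 := by
  have h3 : (Real.exp (4/3)) ^ (3:ℕ) = Real.exp 4 := by
    rw [← Real.exp_nat_mul]; norm_num
  nlinarith [Real.exp_pos (4/3 : ℝ), exp_four_le, sq_nonneg (Real.exp (4/3) - 4),
    sq_nonneg (Real.exp (4/3) + 4)]

private lemma aux_quarter (n : ℕ) (hn : 2 ≤ n) :
    (1/4 : ℝ) ≤ (1 - 1/(n:ℝ)) ^ n := by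
  rcases Nat.lt_or_ge n 4 with h4 | h4
  · interval_cases n <;> norm_num
  · have ht : (4:ℝ) ≤ (n:ℝ) := by exact_mod_cast h4
    set t : ℝ := (n:ℝ) with htdef
    have hpos : (0:ℝ) < t - 1 := by linarith
    have hexp : 1/(t-1) + 1 ≤ Real.exp (1/(t-1)) := Real.add_one_le_exp _
    have h1 : Real.exp (-(1/(t-1))) ≤ 1 - 1/t := by
      rw [Real.exp_neg, inv_le_comm₀ (Real.exp_pos _) (by
        have : 1/t < 1 := by
          rw [div_lt_one (by linarith)]; linarith
        linarith)]
      calc (1 - 1/t)⁻¹ = t/(t-1) := by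
            rw [eq_div_iff (by linarith)]
            field_simp
      _ = 1/(t-1) + 1 := by field_simp; ring
      _ ≤ Real.exp (1/(t-1)) := hexp
    have h2 : Real.exp (-(1/(t-1))) ^ n ≤ (1 - 1/t) ^ n :=
      pow_le_pow_left₀ (Real.exp_pos _).le h1 n
    have h3 : Real.exp (-(1/(t-1))) ^ n = Real.exp (-(t/(t-1))) := by
      rw [← Real.exp_nat_mul]
      congr 1
      field_simp
      rw [htdef]
    have h4' : Real.exp (-(4/3 : ℝ)) ≤ Real.exp (-(t/(t-1))) := by
      apply Real.exp_le_exp.2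
      rw [neg_le_neg_iff, div_le_div_iff₀ (by linarith) (by norm_num : (0:ℝ) < 3)]
      linarith
    have h5 : (1/4 : ℝ) ≤ Real.exp (-(4/3 : ℝ)) := by
      rw [Real.exp_neg, le_inv_comm₀ (by norm_num) (Real.exp_pos _)]
      simpa using exp_43_le
    calc (1/4 : ℝ) ≤ Real.exp (-(4/3:ℝ)) := h5
      _ ≤ Real.exp (-(t/(t-1))) := h4'
      _ = Real.exp (-(1/(t-1))) ^ n := h3.symm
      _ ≤ (1 - 1/t) ^ n := h2

theorem stmt_7 (μ η : ℝ) (K R : ℕ) (hμ : 0 < μ) (hK : 2 ≤ K) (hR : 1 ≤ R)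
    (hη0 : 0 ≤ η) (hη : η ≤ 1 / (μ * K * R))
    (x : ℕ → ℝ) (hx : ∀ t, x (t + 1) = (1 - η * μ) * x t) :
    (1 / 16 : ℝ) ≤ (1 - η * μ) ^ (2 * K * R) ∧
    (1 / 32) * μ * x 0 ^ 2 ≤ μ / 2 * x (K * R) ^ 2 := by
  set n : ℕ := K * R with hn
  have hn2 : 2 ≤ n := le_trans hK (Nat.le_mul_of_pos_right K hR)
  have hnR : (2:ℝ) ≤ (n:ℝ) := by exact_mod_cast hn2
  have hnpos : (0:ℝ) < n := by linarith
  -- η μ ≤ 1/n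
  have hηm : η * μ ≤ 1/(n:ℝ) := by
    have h1 : η * μ ≤ (1 / (μ * K * R)) * μ := by
      apply mul_le_mul_of_nonneg_right hη hμ.le
    calc η * μ ≤ (1 / (μ * K * R)) * μ := h1
      _ = 1/(n:ℝ) := by
          rw [hn]
          push_cast
          field_simp
  have hbase : 1 - 1/(n:ℝ) ≤ 1 - η * μ := by linarith
  have hbnn : (0:ℝ) ≤ 1 - 1/(n:ℝ) := by
    have : 1/(n:ℝ) ≤ 1/2 := by
      apply div_le_div_of_nonneg_left one_pos.le (by norm_num) hnR
    linarith
  have hq := aux_quarter n hn2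
  have hpow : (1/16 : ℝ) ≤ (1 - η * μ) ^ (2 * n) := by
    calc (1/16 : ℝ) = (1/4 : ℝ) * (1/4) := by norm_num
      _ ≤ (1 - 1/(n:ℝ)) ^ n * (1 - 1/(n:ℝ)) ^ n := by
          apply mul_le_mul hq hq (by norm_num) (le_trans (by norm_num) hq)
      _ = (1 - 1/(n:ℝ)) ^ (2 * n) := by rw [two_mul, pow_add]
      _ ≤ (1 - η * μ) ^ (2 * n) := pow_le_pow_left₀ hbnn hbase _
  have hcn : 2 * K * R = 2 * n := by rw [hn, Nat.mul_assoc]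
  refine ⟨by rw [hcn]; exact hpow, ?_⟩
  have hclosed : ∀ t, x t = (1 - η * μ) ^ t * x 0 := by
    intro t
    induction t with
    | zero => simp
    | succ k ih => rw [hx k, ih, pow_succ]; ring
  rw [hclosed n]
  have : μ / 2 * ((1 - η * μ) ^ n * x 0) ^ 2
      = μ / 2 * (1 - η * μ) ^ (2 * n) * x 0 ^ 2 := by
    rw [mul_pow, ← pow_mul]
    ring
  rw [this]
  have hx2 : (0:ℝ) ≤ x 0 ^ 2 := sq_nonneg _
  nlinarith [hpow, hμ.le, mul_le_mul_of_nonneg_right hpow hx2]
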